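/- arXiv:2103.16275 — 2 statements merged into one kernel-verified Lean document; each statement's English description precedes it below -/
import Mathlib

section
/- For every θ ∈ ℝ there exists a linear isometric equivalence B of ℓ²(ℕ×ℕ, ℂ) onto itself (a beam splitter with transmissivity cos²θ) such that B(coh α ⊠ coh β) = coh(α·cos θ + i·β·sin θ) ⊠ coh(β·cos θ + i·α·sin θ) for all α, β ∈ ℂ. -/
open scoped ComplexConjugate ENNReal

/-- The components of the coherent state `|α⟩`: `exp(−|α|²/2)·αⁿ/√(n!)`. -/
noncomputable def cohFun (α : ℂ) : ℕ → ℂ := fun n =>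
  (Real.exp (-‖α‖ ^ 2 / 2) / Real.sqrt (Nat.factorial n) : ℝ) * α ^ n

lemma cohFun_memℓp (α : ℂ) : Memℓp (cohFun α) 2 := by
  apply memℓp_gen
  have h : Summable (fun n : ℕ =>
      Real.exp (-‖α‖ ^ 2 / 2) ^ 2 * ((‖α‖ ^ 2) ^ n / (Nat.factorial n))) :=
    (Real.summable_pow_div_factorial (‖α‖ ^ 2)).mul_left _
  refine h.congr fun n => ?_
  have h2 : ((2 : ℝ≥0∞).toReal) = (2 : ℝ) := by norm_num
  rw [h2, Real.rpow_two]
  have hn : ‖cohFun α n‖ = Real.exp (-‖α‖ ^ 2 / 2) / Real.sqrt (Nat.factorial n) * ‖α‖ ^ n := by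
    simp only [cohFun, norm_mul, norm_pow, Complex.norm_real, Real.norm_eq_abs]
    rw [abs_of_pos (by positivity)]
  rw [hn, mul_pow, div_pow, Real.sq_sqrt (by positivity), pow_right_comm]
  ring

/-- The coherent state `|α⟩` as an element of `ℓ²(ℕ, ℂ)`. -/
noncomputable def coh (α : ℂ) : lp (fun _ : ℕ => ℂ) 2 := ⟨cohFun α, cohFun_memℓp α⟩

/-- The product state `ψ ⊠ χ` in the two-mode space `ℓ²(ℕ×ℕ, ℂ)`,
with components `(ψ ⊠ χ)(n, m) = ψ n · χ m`. -/
noncomputable def tmul (ψ χ : lp (fun _ : ℕ => ℂ) 2) : lp (fun _ : ℕ × ℕ => ℂ) 2 :=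
  ⟨fun q => ψ q.1 * χ q.2, by
    apply memℓp_gen
    have hψ := (lp.memℓp ψ).summable (p := 2) (by norm_num)
    have hχ := (lp.memℓp χ).summable (p := 2) (by norm_num)
    refine (hψ.mul_of_nonneg hχ (fun n => Real.rpow_nonneg (norm_nonneg _) _)
      (fun n => Real.rpow_nonneg (norm_nonneg _) _)).congr fun q => ?_
    rw [norm_mul, Real.mul_rpow (norm_nonneg _) (norm_nonneg _)]⟩

open Submodule Finsupp

lemma summable_pow_div_sqrt_factorial {r : ℝ} (hr : 0 ≤ r) :
    Summable (fun n : ℕ => r ^ n / Real.sqrt (Nat.factorial n)) := by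
  rcases eq_or_lt_of_le hr with h | h
  · refine summable_of_ne_finset_zero (s := {0}) fun n hn => ?_
    simp at hn
    simp [← h, zero_pow hn]
  · apply summable_of_ratio_norm_eventually_le (r := 1/2) (by norm_num)
    have : ∀ᶠ n : ℕ in Filter.atTop, 4 * r ^ 2 ≤ (n + 1 : ℝ) := by
      filter_upwards [Filter.eventually_ge_atTop (Nat.ceil (4 * r ^ 2))] with n hn
      calc 4 * r ^ 2 ≤ (Nat.ceil (4 * r^2) : ℝ) := Nat.le_ceil _
        _ ≤ (n : ℝ) := by exact_mod_cast hn
        _ ≤ (n + 1 : ℝ) := by linarith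
    filter_upwards [this] with n hn
    have hfac : (0:ℝ) < Real.sqrt (Nat.factorial n) := Real.sqrt_pos.2 (by positivity)
    have hfac1 : Real.sqrt (Nat.factorial (n+1)) = Real.sqrt (n+1) * Real.sqrt (Nat.factorial n) := by
      rw [← Real.sqrt_mul (by positivity)]
      congr 1
      rw [Nat.factorial_succ]
      push_cast; ring
    have h2r : 2 * r ≤ Real.sqrt (n + 1) := by
      have : (2*r)^2 ≤ (n+1:ℝ) := by nlinarith
      calc 2*r = Real.sqrt ((2*r)^2) := (Real.sqrt_sq (by positivity)).symm
        _ ≤ Real.sqrt (n+1) := Real.sqrt_le_sqrt this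
    rw [Real.norm_eq_abs, Real.norm_eq_abs, abs_of_pos (by positivity), abs_of_pos (by positivity),
      hfac1, pow_succ]
    rw [div_le_iff₀ (by positivity)]
    have hsn : (0:ℝ) < Real.sqrt (n+1) := by positivity
    have key : 1/2 * (r ^ n / Real.sqrt (Nat.factorial n)) *
        (Real.sqrt ((n:ℝ)+1) * Real.sqrt (Nat.factorial n)) = r^n * (Real.sqrt ((n:ℝ)+1)/2) := by
      field_simp
    rw [key]
    have := pow_pos h n
    nlinarith

local notation "⟪" x ", " y "⟫" => @inner ℂ _ _ x y

lemma coh_apply (α : ℂ) (n : ℕ) : (coh α) n = cohFun α n := rfl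

lemma tmul_apply (ψ χ : lp (fun _ : ℕ => ℂ) 2) (q : ℕ × ℕ) :
    (tmul ψ χ) q = ψ q.1 * χ q.2 := rfl

lemma inner_coh (α β : ℂ) :
    ⟪coh α, coh β⟫ = (Real.exp (-(‖α‖^2 + ‖β‖^2)/2) : ℂ) * Complex.exp (conj α * β) := by
  rw [lp.inner_eq_tsum, Complex.exp_eq_exp_ℂ, NormedSpace.exp_eq_tsum_div, ← tsum_mul_left]
  congr 1; funext n
  rw [RCLike.inner_apply']
  rw [coh_apply, coh_apply]
  simp only [cohFun, map_mul, Complex.conj_ofReal, map_pow]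
  have hs : (Real.sqrt n.factorial : ℂ) * (Real.sqrt n.factorial : ℂ) = (n.factorial : ℂ) := by
    rw [← Complex.ofReal_mul, Real.mul_self_sqrt (by positivity)]
    norm_cast
  have hsne : (Real.sqrt n.factorial : ℂ) ≠ 0 := by
    rw [Complex.ofReal_ne_zero, Real.sqrt_ne_zero']
    exact_mod_cast n.factorial_pos
  have hr : Real.exp (-(‖α‖^2+‖β‖^2)/2) = Real.exp (-‖α‖^2/2) * Real.exp (-‖β‖^2/2) := by
    rw [← Real.exp_add]; ring_nf
  have hfacne : (n.factorial : ℂ) ≠ 0 := by exact_mod_cast n.factorial_ne_zero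
  rw [hr, mul_pow, Complex.ofReal_div, Complex.ofReal_div, Complex.ofReal_mul]
  simp only [Complex.ofReal_exp, Complex.ofReal_neg, Complex.ofReal_div, Complex.ofReal_pow,
    Complex.ofReal_ofNat]
  field_simp
  linear_combination (-(conj α)^n * β^n) * hs

lemma norm_sq_summable {ι : Type*} (ψ : lp (fun _ : ι => ℂ) 2) :
    Summable (fun n => ‖ψ n‖ ^ 2) := by
  have h := (lp.memℓp ψ).summable (p := 2) (by norm_num)
  refine h.congr fun n => ?_
  have h2 : ((2 : ℝ≥0∞).toReal) = (2 : ℝ) := by norm_num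
  rw [h2, Real.rpow_two]

lemma summable_norm_inner {ι : Type*} (ψ χ : lp (fun _ : ι => ℂ) 2) :
    Summable (fun n => ‖(inner ℂ (ψ n) (χ n) : ℂ)‖) := by
  refine Summable.of_nonneg_of_le (fun n => norm_nonneg _) (fun n => ?_)
    (((norm_sq_summable ψ).add (norm_sq_summable χ)))
  rw [RCLike.inner_apply, norm_mul, RCLike.norm_conj]
  nlinarith [norm_nonneg (ψ n), norm_nonneg (χ n), sq_nonneg (‖ψ n‖ - ‖χ n‖)]

lemma inner_tmul (ψ χ ψ' χ' : lp (fun _ : ℕ => ℂ) 2) :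
    ⟪tmul ψ χ, tmul ψ' χ'⟫ = ⟪ψ, ψ'⟫ * ⟪χ, χ'⟫ := by
  rw [lp.inner_eq_tsum, lp.inner_eq_tsum, lp.inner_eq_tsum,
    tsum_mul_tsum_of_summable_norm (summable_norm_inner ψ ψ') (summable_norm_inner χ χ')]
  congr 1; funext q
  simp only [RCLike.inner_apply, tmul_apply, map_mul]
  ring


variable {H : Type*} [NormedAddCommGroup H] [InnerProductSpace ℂ H] [CompleteSpace H]


lemma gram_inner_linearCombination {I : Type*} (v w : I → H)
    (hgram : ∀ i j, ⟪v i, v j⟫ = ⟪w i, w j⟫) (c d : I →₀ ℂ) :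
    ⟪Finsupp.linearCombination ℂ v c, Finsupp.linearCombination ℂ v d⟫
      = ⟪Finsupp.linearCombination ℂ w c, Finsupp.linearCombination ℂ w d⟫ := by
  simp only [Finsupp.linearCombination_apply, Finsupp.sum, sum_inner, inner_sum,
    inner_smul_left, inner_smul_right, hgram]

lemma gram_norm_linearCombination {I : Type*} (v w : I → H)
    (hgram : ∀ i j, ⟪v i, v j⟫ = ⟪w i, w j⟫) (c : I →₀ ℂ) :
    ‖Finsupp.linearCombination ℂ w c‖ = ‖Finsupp.linearCombination ℂ v c‖ := by
  rw [@norm_eq_sqrt_re_inner ℂ, @norm_eq_sqrt_re_inner ℂ, gram_inner_linearCombination v w hgram]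

/-- Existence of a linear isometry sending a total family to a family with the same Gram matrix. -/
lemma exists_linearIsometry_of_gram {I : Type*} (v w : I → H)
    (hgram : ∀ i j, ⟪v i, v j⟫ = ⟪w i, w j⟫)
    (hv : Dense ((span ℂ (Set.range v) : Submodule ℂ H) : Set H)) :
    ∃ T : H →L[ℂ] H, (∀ x, ‖T x‖ = ‖x‖) ∧ ∀ i, T (v i) = w i := by
  classical
  set L := Finsupp.linearCombination ℂ v with hL
  set M := Finsupp.linearCombination ℂ w with hM
  have hker : LinearMap.ker L ≤ LinearMap.ker M := by
    intro c hc
    rw [LinearMap.mem_ker] at hc ⊢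
    have := gram_norm_linearCombination v w hgram c
    rw [hc, norm_zero] at this
    exact norm_eq_zero.1 this
  -- the isometry on the range of L
  let Mbar : ((I →₀ ℂ) ⧸ LinearMap.ker L) →ₗ[ℂ] H := (LinearMap.ker L).liftQ M hker
  let T₀ : LinearMap.range L →ₗ[ℂ] H := Mbar ∘ₗ L.quotKerEquivRange.symm.toLinearMap
  have hT₀ : ∀ c : I →₀ ℂ, T₀ ⟨L c, LinearMap.mem_range_self L c⟩ = M c := by
    intro c
    show Mbar (L.quotKerEquivRange.symm ⟨L c, _⟩) = M c
    rw [L.quotKerEquivRange_symm_apply_image c (LinearMap.mem_range_self L c)]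
    exact Submodule.liftQ_apply _ M c
  have hT₀norm : ∀ x : LinearMap.range L, ‖T₀ x‖ = ‖x‖ := by
    rintro ⟨x, hx⟩
    obtain ⟨c, rfl⟩ := hx
    rw [hT₀ c]
    exact gram_norm_linearCombination v w hgram c
  let T₁ : LinearMap.range L →ₗᵢ[ℂ] H := ⟨T₀, hT₀norm⟩
  -- extend along the dense inclusion
  let e : (LinearMap.range L : Submodule ℂ H) →L[ℂ] H := (LinearMap.range L).subtypeL
  have h_dense : DenseRange e := by
    have : Set.range e = (LinearMap.range L : Set H) := Subtype.range_coe
    rw [DenseRange, this]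
    rwa [Finsupp.range_linearCombination] at *
  have h_unif : IsUniformInducing e := isometry_subtype_coe.isUniformInducing
  refine ⟨T₁.toContinuousLinearMap.extend e, ?_, ?_⟩
  · intro x
    refine h_dense.induction_on x ?_ fun y => ?_
    · exact isClosed_eq (continuous_norm.comp
        (T₁.toContinuousLinearMap.extend e).continuous) continuous_norm
    · rw [ContinuousLinearMap.extend_eq _ h_dense h_unif]
      show ‖T₁ y‖ = ‖e y‖
      rw [T₁.norm_map]
      rfl
  · intro i
    have hsingle : L (Finsupp.single i 1) = v i := by simp [hL]
    have mem : v i ∈ LinearMap.range L := ⟨Finsupp.single i 1, hsingle⟩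
    have hvi : v i = e ⟨v i, mem⟩ := rfl
    rw [hvi, ContinuousLinearMap.extend_eq _ h_dense h_unif]
    show T₀ ⟨v i, mem⟩ = w i
    have heq : (⟨v i, mem⟩ : LinearMap.range L)
        = ⟨L (Finsupp.single i 1), LinearMap.mem_range_self L _⟩ := Subtype.ext hsingle.symm
    rw [heq, hT₀]
    simp [hM]

lemma exists_linearIsometryEquiv_of_gram {I : Type*} (v w : I → H)
    (hgram : ∀ i j, ⟪v i, v j⟫ = ⟪w i, w j⟫)
    (hv : Dense ((span ℂ (Set.range v) : Submodule ℂ H) : Set H))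
    (hw : Dense ((span ℂ (Set.range w) : Submodule ℂ H) : Set H)) :
    ∃ B : H ≃ₗᵢ[ℂ] H, ∀ i, B (v i) = w i := by
  obtain ⟨T, Tnorm, hT⟩ := exists_linearIsometry_of_gram v w hgram hv
  obtain ⟨S, Snorm, hS⟩ := exists_linearIsometry_of_gram w v (fun i j => (hgram i j).symm) hw
  have comp_id : ∀ (A B : H →L[ℂ] H) (u u' : I → H), (∀ i, A (u i) = u' i) → (∀ i, B (u' i) = u i)
      → Dense ((span ℂ (Set.range u) : Submodule ℂ H) : Set H) → ∀ x, B (A x) = x := by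
    intro A B u u' hA hB hu x
    have key : ∀ y ∈ span ℂ (Set.range u), B (A y) = y := by
      intro y hy
      induction hy using Submodule.span_induction with
      | mem y hy => obtain ⟨i, rfl⟩ := hy; rw [hA, hB]
      | zero => simp
      | add y z _ _ hy hz => simp [map_add, hy, hz]
      | smul a y _ hy => simp [map_smul, hy]
    have hcl : IsClosed {x : H | B (A x) = x} :=
      isClosed_eq (B.continuous.comp A.continuous) continuous_id
    have hsub := hcl.closure_subset_iff.2 key
    rw [hu.closure_eq] at hsub
    exact hsub (Set.mem_univ x)
  have hST : ∀ x, S (T x) = x := comp_id T S v w hT hS hv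
  have hTS : ∀ x, T (S x) = x := comp_id S T w v hS hT hw
  exact ⟨{ toFun := T, invFun := S, left_inv := hST, right_inv := hTS,
           map_add' := T.map_add, map_smul' := T.map_smul, norm_map' := Tnorm }, hT⟩


lemma coeff_zero_of_tsum {c : ℕ → ℂ}
    (hsum : ∀ r : ℝ, 0 < r → Summable (fun n => ‖c n‖ * r ^ n))
    (hzero : ∀ z : ℂ, z ≠ 0 → ∑' n, c n * z ^ n = 0) : c 0 = 0 := by
  have hs1 : Summable fun n => ‖c (n + 1)‖ := by
    have h := hsum 1 one_pos
    simp only [one_pow, mul_one] at h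
    exact (summable_nat_add_iff 1).2 h
  set Sb := ∑' n, ‖c (n + 1)‖ with hSb
  have hSbnn : 0 ≤ Sb := tsum_nonneg fun n => norm_nonneg _
  have key : ∀ t : ℝ, 0 < t → t ≤ 1 → ‖c 0‖ ≤ t * Sb := by
    intro t ht ht1
    have htz : (t : ℂ) ≠ 0 := Complex.ofReal_ne_zero.2 ht.ne'
    have hnormeq : ∀ n, ‖c n * (t : ℂ) ^ n‖ = ‖c n‖ * t ^ n := by
      intro n
      rw [norm_mul, norm_pow, Complex.norm_real, Real.norm_eq_abs, abs_of_pos ht]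
    have hnorm : Summable fun n => ‖c n * (t : ℂ) ^ n‖ :=
      (hsum t ht).congr fun n => (hnormeq n).symm
    have hsummable : Summable fun n => c n * (t : ℂ) ^ n := hnorm.of_norm
    have h := hzero t htz
    rw [Summable.tsum_eq_zero_add hsummable, pow_zero, mul_one] at h
    have hc0 : c 0 = -∑' n, c (n + 1) * (t : ℂ) ^ (n + 1) := by linear_combination h
    have hnorm1 : Summable fun n => ‖c (n + 1) * (t : ℂ) ^ (n + 1)‖ :=
      (summable_nat_add_iff (f := fun n => ‖c n * (t : ℂ) ^ n‖) 1).2 hnorm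
    calc ‖c 0‖ = ‖∑' n, c (n + 1) * (t : ℂ) ^ (n + 1)‖ := by rw [hc0, norm_neg]
      _ ≤ ∑' n, ‖c (n + 1) * (t : ℂ) ^ (n + 1)‖ := norm_tsum_le_tsum_norm hnorm1
      _ ≤ ∑' n, ‖c (n + 1)‖ * t := by
          refine Summable.tsum_le_tsum (fun n => ?_) hnorm1 (hs1.mul_right t)
          rw [hnormeq (n + 1)]
          have hpow : t ^ (n + 1) ≤ t := by
            calc t ^ (n + 1) = t * t ^ n := by ring
              _ ≤ t * 1 := by
                  exact mul_le_mul_of_nonneg_left (pow_le_one₀ ht.le ht1) ht.le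
              _ = t := mul_one t
          exact mul_le_mul_of_nonneg_left hpow (norm_nonneg _)
      _ = t * Sb := by rw [tsum_mul_right, hSb, mul_comm]
  have hle : ‖c 0‖ ≤ 0 := by
    refine le_of_forall_pos_le_add fun ε hε => ?_
    have hSb1 : 0 < Sb + 1 := by linarith
    set t := min 1 (ε / (Sb + 1)) with htdef
    have ht : 0 < t := lt_min one_pos (by positivity)
    have := key t ht (min_le_left _ _)
    have h2 : t * Sb ≤ ε / (Sb + 1) * Sb :=
      mul_le_mul_of_nonneg_right (min_le_right _ _) hSbnn
    have h3 : ε / (Sb + 1) * Sb ≤ ε := by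
      rw [div_mul_eq_mul_div, div_le_iff₀ hSb1]
      nlinarith
    linarith
  exact norm_le_zero_iff.1 hle

lemma coeff_eq_zero_of_tsum {c : ℕ → ℂ}
    (hsum : ∀ r : ℝ, 0 < r → Summable (fun n => ‖c n‖ * r ^ n))
    (hzero : ∀ z : ℂ, z ≠ 0 → ∑' n, c n * z ^ n = 0) : ∀ n, c n = 0 := by
  intro n
  induction n generalizing c with
  | zero => exact coeff_zero_of_tsum hsum hzero
  | succ n ih =>
    refine ih (c := fun k => c (k + 1)) (fun r hr => ?_) (fun z hz => ?_)
    · have h := (summable_nat_add_iff 1).2 (hsum r hr)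
      refine (h.mul_right r⁻¹).congr fun k => ?_
      field_simp
      ring
    · have hc0 : c 0 = 0 := coeff_zero_of_tsum hsum hzero
      have hnorm : Summable fun n => ‖c n * z ^ n‖ := by
        refine (hsum ‖z‖ (norm_pos_iff.2 hz)).congr fun n => ?_
        rw [norm_mul, norm_pow]
      have hsummable : Summable fun n => c n * z ^ n := hnorm.of_norm
      have h := hzero z hz
      rw [Summable.tsum_eq_zero_add hsummable, hc0, zero_mul, zero_add] at h
      have hfac : ∀ k : ℕ, c (k + 1) * z ^ (k + 1) = z * (c (k + 1) * z ^ k) := by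
        intro k; ring
      rw [show (fun n : ℕ => c (n + 1) * z ^ (n + 1)) = fun n : ℕ => z * (c (n + 1) * z ^ n)
        from funext hfac, tsum_mul_left] at h
      exact (mul_eq_zero.1 h).resolve_left hz

lemma sqrtfac_ne (n : ℕ) : (Real.sqrt (Nat.factorial n) : ℂ) ≠ 0 := by
  rw [Complex.ofReal_ne_zero, Real.sqrt_ne_zero']
  exact_mod_cast n.factorial_pos

set_option maxHeartbeats 2000000 in
lemma dense_span_tmul_coh :
    Dense ((span ℂ (Set.range (fun p : ℂ × ℂ => tmul (coh p.1) (coh p.2))) :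
      Submodule ℂ (lp (fun _ : ℕ × ℕ => ℂ) 2)) : Set (lp (fun _ : ℕ × ℕ => ℂ) 2)) := by
  rw [Submodule.dense_iff_topologicalClosure_eq_top,
    Submodule.topologicalClosure_eq_top_iff, Submodule.eq_bot_iff]
  intro x hx
  have hx' : ∀ α β : ℂ, ⟪tmul (coh α) (coh β), x⟫ = 0 := fun α β =>
    (Submodule.mem_orthogonal _ x).1 hx _ (subset_span ⟨(α, β), rfl⟩)
  set g : ℂ → ℂ → ℕ × ℕ → ℂ := fun y z q =>
    x q * (y ^ q.1 / (Real.sqrt (Nat.factorial q.1) : ℂ))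
      * (z ^ q.2 / (Real.sqrt (Nat.factorial q.2) : ℂ)) with hg
  have hxq : ∀ q : ℕ × ℕ, ‖x q‖ ≤ ‖x‖ := fun q => lp.norm_apply_le_norm (by norm_num) x q
  have hgnorm : ∀ y z q, ‖g y z q‖
      = ‖x q‖ * (‖y‖ ^ q.1 / Real.sqrt (Nat.factorial q.1))
        * (‖z‖ ^ q.2 / Real.sqrt (Nat.factorial q.2)) := by
    intro y z q
    rw [hg]
    simp only [norm_mul, norm_div, norm_pow, Complex.norm_real, Real.norm_eq_abs,
      abs_of_nonneg (Real.sqrt_nonneg _)]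
  have hgbound : ∀ y z q, ‖g y z q‖
      ≤ (‖x‖ * (‖y‖ ^ q.1 / Real.sqrt (Nat.factorial q.1)))
        * (‖z‖ ^ q.2 / Real.sqrt (Nat.factorial q.2)) := by
    intro y z q
    rw [hgnorm]
    have h1 : (0:ℝ) ≤ ‖y‖ ^ q.1 / Real.sqrt (Nat.factorial q.1) := by positivity
    have h2 : (0:ℝ) ≤ ‖z‖ ^ q.2 / Real.sqrt (Nat.factorial q.2) := by positivity
    exact mul_le_mul_of_nonneg_right (mul_le_mul_of_nonneg_right (hxq q) h1) h2
  have hsumg : ∀ y z, Summable fun q => ‖g y z q‖ := by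
    intro y z
    refine Summable.of_nonneg_of_le (fun q => norm_nonneg _) (hgbound y z) ?_
    exact ((summable_pow_div_sqrt_factorial (norm_nonneg y)).mul_left ‖x‖).mul_of_nonneg
      (summable_pow_div_sqrt_factorial (norm_nonneg z)) (fun n => by positivity)
      (fun m => by positivity)
  have hgzero : ∀ y z : ℂ, ∑' q, g y z q = 0 := by
    intro y z
    have h := hx' (conj y) (conj z)
    rw [lp.inner_eq_tsum] at h
    have hre : (fun q : ℕ × ℕ => ⟪(tmul (coh (conj y)) (coh (conj z))) q, x q⟫)
        = fun q => ((Real.exp (-‖conj y‖^2/2) * Real.exp (-‖conj z‖^2/2) : ℝ) : ℂ)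
            * g y z q := by
      funext q
      rw [RCLike.inner_apply, tmul_apply, coh_apply, coh_apply]
      simp only [cohFun, map_mul, Complex.conj_ofReal, map_pow, Complex.conj_conj, hg]
      simp only [Complex.ofReal_div, Complex.ofReal_mul]
      ring
    rw [hre, tsum_mul_left] at h
    rcases mul_eq_zero.1 h with h0 | h0
    · exact absurd h0 (Complex.ofReal_ne_zero.2 (by positivity))
    · exact h0
  -- row-wise summability
  have hrow : ∀ y z (n : ℕ), Summable fun m => g y z (n, m) := by
    intro y z n
    apply Summable.of_norm
    refine Summable.of_nonneg_of_le (fun m => norm_nonneg _) (fun m => hgbound y z (n, m))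
      ((summable_pow_div_sqrt_factorial (norm_nonneg z)).mul_left
        (‖x‖ * (‖y‖ ^ n / Real.sqrt (Nat.factorial n))))
  -- coefficients in y
  set c : ℂ → ℕ → ℂ := fun z n =>
    (∑' m, x (n, m) * (z ^ m / (Real.sqrt (Nat.factorial m) : ℂ)))
      / (Real.sqrt (Nat.factorial n) : ℂ) with hc
  have hfact : ∀ y z, ∑' q, g y z q = ∑' n, c z n * y ^ n := by
    intro y z
    rw [Summable.tsum_prod' (hsumg y z).of_norm (hrow y z)]
    congr 1; funext n
    have hterm : ∀ m, g y z (n, m)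
        = (y ^ n / (Real.sqrt (Nat.factorial n) : ℂ))
          * (x (n, m) * (z ^ m / (Real.sqrt (Nat.factorial m) : ℂ))) := by
      intro m
      rw [hg]
      ring
    rw [tsum_congr hterm, tsum_mul_left]
    simp only [hc]
    ring
  have hrownorm : ∀ z (n : ℕ), Summable fun m =>
      ‖x (n, m) * ((z:ℂ) ^ m / (Real.sqrt (Nat.factorial m) : ℂ))‖ := by
    intro z n
    refine Summable.of_nonneg_of_le (fun m => norm_nonneg _) (fun m => ?_)
      ((summable_pow_div_sqrt_factorial (norm_nonneg z)).mul_left ‖x‖)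
    rw [norm_mul, norm_div, norm_pow, Complex.norm_real, Real.norm_eq_abs,
      abs_of_nonneg (Real.sqrt_nonneg _)]
    exact mul_le_mul_of_nonneg_right (hxq (n, m)) (by positivity)
  have hcnorm : ∀ z (n : ℕ), ‖c z n‖
      ≤ (∑' m, ‖x‖ * (‖z‖ ^ m / Real.sqrt (Nat.factorial m))) / Real.sqrt (Nat.factorial n) := by
    intro z n
    rw [hc]
    simp only [norm_div, Complex.norm_real, Real.norm_eq_abs,
      abs_of_nonneg (Real.sqrt_nonneg _)]
    gcongr
    calc ‖∑' m, x (n, m) * ((z:ℂ) ^ m / (Real.sqrt (Nat.factorial m) : ℂ))‖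
        ≤ ∑' m, ‖x (n, m) * ((z:ℂ) ^ m / (Real.sqrt (Nat.factorial m) : ℂ))‖ :=
          norm_tsum_le_tsum_norm (hrownorm z n)
      _ ≤ ∑' m, ‖x‖ * (‖z‖ ^ m / Real.sqrt (Nat.factorial m)) := by
          refine Summable.tsum_le_tsum (fun m => ?_) (hrownorm z n)
            ((summable_pow_div_sqrt_factorial (norm_nonneg z)).mul_left ‖x‖)
          rw [norm_mul, norm_div, norm_pow, Complex.norm_real, Real.norm_eq_abs,
            abs_of_nonneg (Real.sqrt_nonneg _)]
          exact mul_le_mul_of_nonneg_right (hxq (n, m)) (by positivity)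
  have hcsum : ∀ z, ∀ r : ℝ, 0 < r → Summable fun n => ‖c z n‖ * r ^ n := by
    intro z r hr
    set K := ∑' m, ‖x‖ * (‖z‖ ^ m / Real.sqrt (Nat.factorial m)) with hK
    have hKnn : 0 ≤ K := tsum_nonneg fun m => by positivity
    refine Summable.of_nonneg_of_le (fun n => by positivity) (fun n => ?_)
      ((summable_pow_div_sqrt_factorial hr.le).mul_left K)
    calc ‖c z n‖ * r ^ n
        ≤ K / Real.sqrt (Nat.factorial n) * r ^ n :=
          mul_le_mul_of_nonneg_right (hcnorm z n) (by positivity)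
      _ = K * (r ^ n / Real.sqrt (Nat.factorial n)) := by ring
  have hczero : ∀ z (n : ℕ), c z n = 0 := by
    intro z n
    refine coeff_eq_zero_of_tsum (hcsum z) (fun y hy => ?_) n
    rw [← hfact y z, hgzero]
  have hinner : ∀ n m : ℕ, x (n, m) = 0 := by
    intro n m
    have hz : ∀ z : ℂ, ∑' m, (x (n, m) / (Real.sqrt (Nat.factorial m) : ℂ)) * z ^ m = 0 := by
      intro z
      have h := hczero z n
      rw [hc, div_eq_zero_iff] at h
      rcases h with h | h
      · rw [← h]
        exact tsum_congr fun m => by ring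
      · exact absurd h (sqrtfac_ne n)
    have hd := coeff_eq_zero_of_tsum (c := fun m => x (n, m) / (Real.sqrt (Nat.factorial m) : ℂ))
      (fun r hr => ?_) (fun z hz' => hz z) m
    · rw [div_eq_zero_iff] at hd
      exact hd.resolve_right (sqrtfac_ne m)
    · refine Summable.of_nonneg_of_le (fun k => by positivity) (fun k => ?_)
        ((summable_pow_div_sqrt_factorial hr.le).mul_left ‖x‖)
      rw [norm_div, Complex.norm_real, Real.norm_eq_abs, abs_of_nonneg (Real.sqrt_nonneg _)]
      calc ‖x (n, k)‖ / Real.sqrt (Nat.factorial k) * r ^ k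
          ≤ ‖x‖ / Real.sqrt (Nat.factorial k) * r ^ k := by
            have hsk : (0:ℝ) < Real.sqrt (Nat.factorial k) := by
              rw [Real.sqrt_pos]; exact_mod_cast k.factorial_pos
            exact mul_le_mul_of_nonneg_right
              (by gcongr; exact hxq (n, k)) (by positivity)
        _ = ‖x‖ * (r ^ k / Real.sqrt (Nat.factorial k)) := by ring
  apply lp.ext
  funext q
  rw [hinner q.1 q.2]
  simp

/-- existence of the beam splitter with transmissivity `cos²θ`. -/
theorem exists_beam_splitter (θ : ℝ) :
    ∃ B : lp (fun _ : ℕ × ℕ => ℂ) 2 ≃ₗᵢ[ℂ] lp (fun _ : ℕ × ℕ => ℂ) 2,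
      ∀ α β : ℂ, B (tmul (coh α) (coh β))
        = tmul (coh (α * (Real.cos θ : ℂ) + Complex.I * β * (Real.sin θ : ℂ)))
               (coh (β * (Real.cos θ : ℂ) + Complex.I * α * (Real.sin θ : ℂ))) := by
  set c : ℝ := Real.cos θ with hcdef
  set s : ℝ := Real.sin θ with hsdef
  have hcs : (c : ℂ)^2 + (s : ℂ)^2 = 1 := by
    rw [← Complex.ofReal_pow, ← Complex.ofReal_pow, ← Complex.ofReal_add, ← Complex.ofReal_one]
    exact congrArg _ (Real.cos_sq_add_sin_sq θ)
  set f : ℂ × ℂ → ℂ × ℂ := fun p =>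
    (p.1 * (c:ℂ) + Complex.I * p.2 * (s:ℂ), p.2 * (c:ℂ) + Complex.I * p.1 * (s:ℂ)) with hf
  set v : ℂ × ℂ → lp (fun _ : ℕ × ℕ => ℂ) 2 := fun p => tmul (coh p.1) (coh p.2) with hv
  set w : ℂ × ℂ → lp (fun _ : ℕ × ℕ => ℂ) 2 := fun p => v (f p) with hw
  -- key algebraic identity
  have hkey : ∀ a b a' b' : ℂ,
      conj (a * (c:ℂ) + Complex.I * b * (s:ℂ)) * (a' * (c:ℂ) + Complex.I * b' * (s:ℂ))
        + conj (b * (c:ℂ) + Complex.I * a * (s:ℂ)) * (b' * (c:ℂ) + Complex.I * a' * (s:ℂ))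
      = conj a * a' + conj b * b' := by
    intro a b a' b'
    simp only [map_add, map_mul, Complex.conj_ofReal, Complex.conj_I]
    linear_combination (conj a * a' + conj b * b') * hcs
      - (conj a * a' + conj b * b') * (s:ℂ)^2 * Complex.I_sq
  have hnormid : ∀ a b : ℂ,
      ‖a * (c:ℂ) + Complex.I * b * (s:ℂ)‖^2 + ‖b * (c:ℂ) + Complex.I * a * (s:ℂ)‖^2
        = ‖a‖^2 + ‖b‖^2 := by
    intro a b
    have h := hkey a b a b
    have hre : ∀ u : ℂ, (conj u * u).re = ‖u‖^2 := by
      intro u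
      rw [mul_comm, Complex.mul_conj]
      simp only [Complex.normSq_eq_norm_sq]
      exact Complex.ofReal_re _
    have := congrArg Complex.re h
    simpa only [Complex.add_re, hre] using this
  have hgram : ∀ p q : ℂ × ℂ, ⟪v p, v q⟫ = ⟪w p, w q⟫ := by
    intro p q
    rw [hw, hv, hf]
    simp only []
    rw [inner_tmul, inner_tmul, inner_coh, inner_coh, inner_coh, inner_coh]
    have combine : ∀ (x1 x2 : ℝ) (z1 z2 : ℂ),
        ((Real.exp x1 : ℝ) : ℂ) * Complex.exp z1 * (((Real.exp x2 : ℝ) : ℂ) * Complex.exp z2)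
          = ((Real.exp (x1 + x2) : ℝ) : ℂ) * Complex.exp (z1 + z2) := by
      intro x1 x2 z1 z2
      rw [Real.exp_add, Complex.exp_add]
      push_cast
      ring
    rw [combine, combine]
    have h1 := hnormid p.1 p.2
    have h2 := hnormid q.1 q.2
    have hexp : -(‖p.1‖^2 + ‖q.1‖^2)/2 + -(‖p.2‖^2 + ‖q.2‖^2)/2
        = -(‖p.1 * (c:ℂ) + Complex.I * p.2 * (s:ℂ)‖^2
            + ‖q.1 * (c:ℂ) + Complex.I * q.2 * (s:ℂ)‖^2)/2
          + -(‖p.2 * (c:ℂ) + Complex.I * p.1 * (s:ℂ)‖^2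
            + ‖q.2 * (c:ℂ) + Complex.I * q.1 * (s:ℂ)‖^2)/2 := by
      linarith
    rw [← hkey p.1 p.2 q.1 q.2, ← hexp]
  have hfsurj : Function.Surjective f := by
    intro u
    refine ⟨(u.1 * (c:ℂ) - Complex.I * u.2 * (s:ℂ), u.2 * (c:ℂ) - Complex.I * u.1 * (s:ℂ)), ?_⟩
    rw [hf]
    refine Prod.ext ?_ ?_
    · show (u.1 * (c:ℂ) - Complex.I * u.2 * (s:ℂ)) * (c:ℂ)
          + Complex.I * (u.2 * (c:ℂ) - Complex.I * u.1 * (s:ℂ)) * (s:ℂ) = u.1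
      linear_combination u.1 * hcs - u.1 * (s:ℂ)^2 * Complex.I_sq
    · show (u.2 * (c:ℂ) - Complex.I * u.1 * (s:ℂ)) * (c:ℂ)
          + Complex.I * (u.1 * (c:ℂ) - Complex.I * u.2 * (s:ℂ)) * (s:ℂ) = u.2
      linear_combination u.2 * hcs - u.2 * (s:ℂ)^2 * Complex.I_sq
  have hrange : Set.range w = Set.range v := hfsurj.range_comp v
  have hdv : Dense ((span ℂ (Set.range v) : Submodule ℂ (lp (fun _ : ℕ × ℕ => ℂ) 2)) :
      Set (lp (fun _ : ℕ × ℕ => ℂ) 2)) := dense_span_tmul_coh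
  have hdw : Dense ((span ℂ (Set.range w) : Submodule ℂ (lp (fun _ : ℕ × ℕ => ℂ) 2)) :
      Set (lp (fun _ : ℕ × ℕ => ℂ) 2)) := by rw [hrange]; exact hdv
  obtain ⟨B, hB⟩ := exists_linearIsometryEquiv_of_gram v w hgram hdv hdw
  exact ⟨B, fun α β => hB (α, β)⟩
end

section
/- (Lemma 2) Let J be a type, let α, β, γ ∈ ℂ be all nonzero, and let φ ∈ ℓ²(ℕ×ℕ×ℕ×J, ℂ). Define the bounded operators Θ₁ = (I ⊗ P₀ + P_α ⊗ I − P_α ⊗ P₀) acting on indices (1,2), Θ₂ = (I ⊗ P_β + P₀ ⊗ I − P₀ ⊗ P_β) acting on indices (1,2), Θ₃ = (I ⊗ P₀ + P_β ⊗ I − P_β ⊗ P₀) acting on indices (2,3), and Θ₄ = (I ⊗ P_γ + P₀ ⊗ I − P₀ ⊗ P_γ) acting on indices (2,3), each acting as the identity on all remaining indices. If Θᵢ φ = φ for i = 1, 2, 3, 4, then there exist ψ₁, ψ₂ ∈ ℓ²(J, ℂ) such that φ(n,m,p,j) = (coh α) n · (coh β) m · (coh γ) p · ψ₁ j + (coh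 0) n · (coh 0) m · (coh 0) p · ψ₂ j for all n, m, p, j. -/
open scoped ComplexConjugate ENNReal

lemma cohFun_zero_of_ne (k : ℕ) (hk : k ≠ 0) : cohFun 0 k = 0 := by
  simp [cohFun, zero_pow hk]

lemma cohFun_zero_zero : cohFun 0 0 = 1 := by
  simp [cohFun]

lemma cohFun_ne_zero {α : ℂ} (hα : α ≠ 0) (n : ℕ) : cohFun α n ≠ 0 := by
  unfold cohFun
  apply mul_ne_zero
  · rw [Complex.ofReal_ne_zero]
    have h1 : (0:ℝ) < Real.sqrt (Nat.factorial n) := Real.sqrt_pos.mpr (by positivity)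
    exact ne_of_gt (div_pos (Real.exp_pos _) h1)
  · exact pow_ne_zero n hα

/-- Lemma 2: a state of `ℓ²(ℕ×ℕ×ℕ×J, ℂ)` fixed by the four measurement
operators `Θ₁, Θ₂, Θ₃, Θ₄` is a superposition
`coh α ⊗ coh β ⊗ coh γ ⊗ ψ₁ + coh 0 ⊗ coh 0 ⊗ coh 0 ⊗ ψ₂`. -/
theorem lemma2_three_mode_with_ancilla (J : Type*) (α β γ : ℂ)
    (hα : α ≠ 0) (hβ : β ≠ 0) (hγ : γ ≠ 0)
    (φ : lp (fun _ : ℕ × ℕ × ℕ × J => ℂ) 2)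
    (Θ₁ Θ₂ Θ₃ Θ₄ : lp (fun _ : ℕ × ℕ × ℕ × J => ℂ) 2 →L[ℂ] lp (fun _ : ℕ × ℕ × ℕ × J => ℂ) 2)
    (hΘ₁ : ∀ (ψ : lp (fun _ : ℕ × ℕ × ℕ × J => ℂ) 2) (n m p : ℕ) (j : J),
      (Θ₁ ψ) (n, m, p, j)
        = cohFun 0 m * (∑' k : ℕ, conj (cohFun 0 k) * ψ (n, k, p, j))
        + cohFun α n * (∑' k : ℕ, conj (cohFun α k) * ψ (k, m, p, j))
        - cohFun α n * cohFun 0 m *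
            (∑' k : ℕ, ∑' l : ℕ, conj (cohFun α k) * conj (cohFun 0 l) * ψ (k, l, p, j)))
    (hΘ₂ : ∀ (ψ : lp (fun _ : ℕ × ℕ × ℕ × J => ℂ) 2) (n m p : ℕ) (j : J),
      (Θ₂ ψ) (n, m, p, j)
        = cohFun β m * (∑' k : ℕ, conj (cohFun β k) * ψ (n, k, p, j))
        + cohFun 0 n * (∑' k : ℕ, conj (cohFun 0 k) * ψ (k, m, p, j))
        - cohFun 0 n * cohFun β m *
            (∑' k : ℕ, ∑' l : ℕ, conj (cohFun 0 k) * conj (cohFun β l) * ψ (k, l, p, j)))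
    (hΘ₃ : ∀ (ψ : lp (fun _ : ℕ × ℕ × ℕ × J => ℂ) 2) (n m p : ℕ) (j : J),
      (Θ₃ ψ) (n, m, p, j)
        = cohFun 0 p * (∑' k : ℕ, conj (cohFun 0 k) * ψ (n, m, k, j))
        + cohFun β m * (∑' k : ℕ, conj (cohFun β k) * ψ (n, k, p, j))
        - cohFun β m * cohFun 0 p *
            (∑' k : ℕ, ∑' l : ℕ, conj (cohFun β k) * conj (cohFun 0 l) * ψ (n, k, l, j)))
    (hΘ₄ : ∀ (ψ : lp (fun _ : ℕ × ℕ × ℕ × J => ℂ) 2) (n m p : ℕ) (j : J),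
      (Θ₄ ψ) (n, m, p, j)
        = cohFun γ p * (∑' k : ℕ, conj (cohFun γ k) * ψ (n, m, k, j))
        + cohFun 0 m * (∑' k : ℕ, conj (cohFun 0 k) * ψ (n, k, p, j))
        - cohFun 0 m * cohFun γ p *
            (∑' k : ℕ, ∑' l : ℕ, conj (cohFun 0 k) * conj (cohFun γ l) * ψ (n, k, l, j)))
    (h1 : Θ₁ φ = φ) (h2 : Θ₂ φ = φ) (h3 : Θ₃ φ = φ) (h4 : Θ₄ φ = φ) :
    ∃ ψ₁ ψ₂ : lp (fun _ : J => ℂ) 2, ∀ (n m p : ℕ) (j : J),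
      φ (n, m, p, j)
        = cohFun α n * cohFun β m * cohFun γ p * ψ₁ j
        + cohFun 0 n * cohFun 0 m * cohFun 0 p * ψ₂ j := by
  classical
  -- slices in j are ℓ²
  have hφmem : Memℓp (⇑φ) 2 := lp.memℓp φ
  have hslice : ∀ n m p : ℕ, Memℓp (fun j : J => φ (n, m, p, j)) 2 := by
    intro n m p
    apply memℓp_gen
    have hsum := hφmem.summable (by norm_num)
    have hinj : Function.Injective (fun j : J => ((n, m, p, j) : ℕ × ℕ × ℕ × J)) := by
      intro a b h; simpa using h
    exact hsum.comp_injective hinj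
  -- pointwise fixed point equations, using that cohFun 0 vanishes away from 0
  have hA : ∀ (n m p : ℕ) (j : J), m ≠ 0 → φ (n, m, p, j)
      = cohFun α n * (∑' k : ℕ, conj (cohFun α k) * φ (k, m, p, j)) := by
    intro n m p j hm
    have h := hΘ₁ φ n m p j
    rw [h1, cohFun_zero_of_ne m hm] at h
    simpa using h
  have hC2 : ∀ (n m p : ℕ) (j : J), n ≠ 0 → φ (n, m, p, j)
      = cohFun β m * (∑' k : ℕ, conj (cohFun β k) * φ (n, k, p, j)) := by
    intro n m p j hn
    have h := hΘ₂ φ n m p j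
    rw [h2, cohFun_zero_of_ne n hn] at h
    simpa using h
  have hC3 : ∀ (n m p : ℕ) (j : J), p ≠ 0 → φ (n, m, p, j)
      = cohFun β m * (∑' k : ℕ, conj (cohFun β k) * φ (n, k, p, j)) := by
    intro n m p j hp
    have h := hΘ₃ φ n m p j
    rw [h3, cohFun_zero_of_ne p hp] at h
    simpa using h
  have hG : ∀ (n m p : ℕ) (j : J), m ≠ 0 → φ (n, m, p, j)
      = cohFun γ p * (∑' k : ℕ, conj (cohFun γ k) * φ (n, m, k, j)) := by
    intro n m p j hm
    have h := hΘ₄ φ n m p j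
    rw [h4, cohFun_zero_of_ne m hm] at h
    simpa using h
  have ha := cohFun_ne_zero hα
  have hb := cohFun_ne_zero hβ
  have hc := cohFun_ne_zero hγ
  have hD : cohFun α 1 * cohFun β 1 * cohFun γ 1 ≠ 0 :=
    mul_ne_zero (mul_ne_zero (ha 1) (hb 1)) (hc 1)
  -- case m ≠ 0, multiplicative form
  have hm_case : ∀ (n m p : ℕ) (j : J), m ≠ 0 →
      φ (n, m, p, j) * (cohFun α 1 * cohFun β 1 * cohFun γ 1)
        = cohFun α n * cohFun β m * cohFun γ p * φ (1, 1, 1, j) := by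
    intro n m p j hm
    have f1 : cohFun γ 1 * φ (n, m, p, j) = cohFun γ p * φ (n, m, 1, j) := by
      rw [hG n m p j hm, hG n m 1 j hm]; ring
    have f2 : cohFun β 1 * φ (n, m, 1, j) = cohFun β m * φ (n, 1, 1, j) := by
      rw [hC3 n m 1 j one_ne_zero, hC3 n 1 1 j one_ne_zero]; ring
    have f3 : cohFun α 1 * φ (n, 1, 1, j) = cohFun α n * φ (1, 1, 1, j) := by
      rw [hA n 1 1 j one_ne_zero, hA 1 1 1 j one_ne_zero]; ring
    linear_combination cohFun α 1 * cohFun β 1 * f1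
      + cohFun α 1 * cohFun γ p * f2 + cohFun β m * cohFun γ p * f3
  -- main pointwise formula away from (0,0,0), multiplicative form
  have main : ∀ (n m p : ℕ) (j : J), ¬(n = 0 ∧ m = 0 ∧ p = 0) →
      φ (n, m, p, j) * (cohFun α 1 * cohFun β 1 * cohFun γ 1)
        = cohFun α n * cohFun β m * cohFun γ p * φ (1, 1, 1, j) := by
    intro n m p j h
    by_cases hm : m = 0
    · subst hm
      by_cases hp : p = 0
      · subst hp
        have hn : n ≠ 0 := by tauto
        have f1 : cohFun β 1 * φ (n, 0, 0, j) = cohFun β 0 * φ (n, 1, 0, j) := by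
          rw [hC2 n 0 0 j hn, hC2 n 1 0 j hn]; ring
        have f2 := hm_case n 1 0 j one_ne_zero
        refine mul_left_cancel₀ (hb 1) ?_
        linear_combination (cohFun α 1 * cohFun β 1 * cohFun γ 1) * f1
          + cohFun β 0 * f2
      · have f1 : cohFun β 1 * φ (n, 0, p, j) = cohFun β 0 * φ (n, 1, p, j) := by
          rw [hC3 n 0 p j hp, hC3 n 1 p j hp]; ring
        have f2 := hm_case n 1 p j one_ne_zero
        refine mul_left_cancel₀ (hb 1) ?_
        linear_combination (cohFun α 1 * cohFun β 1 * cohFun γ 1) * f1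
          + cohFun β 0 * f2
    · exact hm_case n m p j hm
  -- build the ℓ² vectors ψ₁, ψ₂
  refine ⟨(cohFun α 1 * cohFun β 1 * cohFun γ 1)⁻¹ •
      (⟨fun j => φ (1, 1, 1, j), hslice 1 1 1⟩ : lp (fun _ : J => ℂ) 2),
    (⟨fun j => φ (0, 0, 0, j), hslice 0 0 0⟩ : lp (fun _ : J => ℂ) 2)
      - ((cohFun α 0 * cohFun β 0 * cohFun γ 0) *
          (cohFun α 1 * cohFun β 1 * cohFun γ 1)⁻¹) •
        (⟨fun j => φ (1, 1, 1, j), hslice 1 1 1⟩ : lp (fun _ : J => ℂ) 2), ?_⟩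
  intro n m p j
  have hcoe1 : ((cohFun α 1 * cohFun β 1 * cohFun γ 1)⁻¹ •
      (⟨fun j => φ (1, 1, 1, j), hslice 1 1 1⟩ : lp (fun _ : J => ℂ) 2)) j
      = (cohFun α 1 * cohFun β 1 * cohFun γ 1)⁻¹ * φ (1, 1, 1, j) := rfl
  have hcoe2 : ((⟨fun j => φ (0, 0, 0, j), hslice 0 0 0⟩ : lp (fun _ : J => ℂ) 2)
      - ((cohFun α 0 * cohFun β 0 * cohFun γ 0) *
          (cohFun α 1 * cohFun β 1 * cohFun γ 1)⁻¹) •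
        (⟨fun j => φ (1, 1, 1, j), hslice 1 1 1⟩ : lp (fun _ : J => ℂ) 2)) j
      = φ (0, 0, 0, j) - (cohFun α 0 * cohFun β 0 * cohFun γ 0) *
          (cohFun α 1 * cohFun β 1 * cohFun γ 1)⁻¹ * φ (1, 1, 1, j) := by
    rw [lp.coeFn_sub, Pi.sub_apply]
    rfl
  rw [hcoe1, hcoe2]
  by_cases h0 : n = 0 ∧ m = 0 ∧ p = 0
  · obtain ⟨hn, hm, hp⟩ := h0
    subst hn; subst hm; subst hp
    rw [cohFun_zero_zero]
    ring
  · have hmain := main n m p j h0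
    have hz : cohFun 0 n * cohFun 0 m * cohFun 0 p = 0 := by
      rcases not_and_or.mp h0 with hn | h0'
      · rw [cohFun_zero_of_ne n hn]; ring
      · rcases not_and_or.mp h0' with hm | hp
        · rw [cohFun_zero_of_ne m hm]; ring
        · rw [cohFun_zero_of_ne p hp]; ring
    rw [hz, zero_mul, add_zero]
    field_simp [hD]
    linear_combination (cohFun α 1 * cohFun β 1 * cohFun γ 1)⁻¹ * hmain - φ (n, m, p, j) * mul_inv_cancel₀ hD
end
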